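/- arXiv:1903.00692 — 2 statements merged into one kernel-verified Lean document; each statement's English description precedes it below -/
import Mathlib

section
/- Let λ be a partition of m different from (m) and (1,1,...,1), and let χ^λ be the corresponding irreducible character of the symmetric group S_m. Then χ^λ(1) - χ^λ((123)) ≥ χ^λ(1)/(m-1), where (123) denotes a 3-cycle. -/
set_option linter.unusedSectionVars false

open LinearMap Module Equiv Equiv.Perm Representation

noncomputable section

namespace S8

variable {G : Type*} [Group G] [Fintype G]
variable {W : Type*} [AddCommGroup W] [Module ℂ W]

/-- A submodule stable under a representation. -/
def Stable (ρ : Representation ℂ G W) (U : Submodule ℂ W) : Prop :=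
  ∀ σ : G, ∀ x ∈ U, ρ σ x ∈ U

/-- Restriction of a representation to a stable submodule. -/
def subRep (ρ : Representation ℂ G W) {U : Submodule ℂ W} (hU : Stable ρ U) :
    Representation ℂ G U where
  toFun σ := (ρ σ).restrict (hU σ)
  map_one' := by ext x; simp [LinearMap.restrict_apply]
  map_mul' σ τ := by ext x; simp [LinearMap.restrict_apply]

@[simp] lemma subRep_apply (ρ : Representation ℂ G W) {U : Submodule ℂ W} (hU : Stable ρ U)
    (σ : G) (x : U) : (subRep ρ hU σ x : W) = ρ σ (x : W) := rfl

lemma rho_inv_apply (ρ : Representation ℂ G W) (σ : G) (x : W) : ρ σ (ρ σ⁻¹ x) = x := by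
  have := LinearMap.congr_fun (ρ.map_mul σ σ⁻¹) x
  simp only [mul_inv_cancel, map_one] at this
  simpa using this.symm

/-- Maschke: a stable submodule has a stable complement. -/
theorem exists_stable_compl (ρ : Representation ℂ G W) {U : Submodule ℂ W} (hU : Stable ρ U) :
    ∃ U' : Submodule ℂ W, Stable ρ U' ∧ IsCompl U U' := by
  obtain ⟨U₀, hc⟩ := Submodule.exists_isCompl U
  set q : W →ₗ[ℂ] W := U.subtype ∘ₗ U.projectionOnto U₀ hc with hq
  set π : W →ₗ[ℂ] W := (Fintype.card G : ℂ)⁻¹ • ∑ σ : G, ρ σ ∘ₗ q ∘ₗ ρ σ⁻¹ with hπ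
  have hcard : (Fintype.card G : ℂ) ≠ 0 := Nat.cast_ne_zero.2 Fintype.card_ne_zero
  have hπapp : ∀ x : W, π x = (Fintype.card G : ℂ)⁻¹ • ∑ σ : G, ρ σ (q (ρ σ⁻¹ x)) := by
    intro x; simp [hπ]
  have hqU : ∀ x : W, q x ∈ U := fun x => (U.projectionOnto U₀ hc x).2
  have hqfix : ∀ x ∈ U, q x = x := by
    intro x hx
    simp [hq, Submodule.projectionOnto_apply_left hc ⟨x, hx⟩]
  have hπU : ∀ x : W, π x ∈ U := by
    intro x
    rw [hπapp]
    exact Submodule.smul_mem _ _ (Submodule.sum_mem _ fun σ _ => hU σ _ (hqU _))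
  have hπfix : ∀ x ∈ U, π x = x := by
    intro x hx
    rw [hπapp]
    have : ∀ σ : G, ρ σ (q (ρ σ⁻¹ x)) = x := by
      intro σ
      rw [hqfix _ (hU σ⁻¹ x hx), rho_inv_apply]
    rw [Finset.sum_congr rfl fun σ _ => this σ, Finset.sum_const, Finset.card_univ]
    rw [← Nat.cast_smul_eq_nsmul ℂ, smul_smul, inv_mul_cancel₀ hcard, one_smul]
  have hπcomm : ∀ τ : G, ∀ x : W, π (ρ τ x) = ρ τ (π x) := by
    intro τ x
    rw [hπapp, hπapp, map_smul, map_sum]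
    congr 1
    have h1 : ∀ a b : G, ∀ y : W, ρ a (ρ b y) = ρ (a * b) y := by
      intro a b y; rw [map_mul ρ]; rfl
    refine Fintype.sum_equiv (Equiv.mulLeft τ⁻¹) _ _ fun σ => ?_
    simp only [Equiv.coe_mulLeft]
    rw [h1 σ⁻¹ τ, h1 τ (τ⁻¹ * σ), mul_inv_cancel_left, mul_inv_rev, inv_inv]
  refine ⟨LinearMap.ker π, fun σ x hx => ?_, ?_⟩
  · simp only [LinearMap.mem_ker] at hx ⊢
    rw [hπcomm σ x, hx, map_zero]
  · constructor
    · rw [Submodule.disjoint_def]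
      intro x hxU hxK
      rw [LinearMap.mem_ker] at hxK
      rw [← hπfix x hxU, hxK]
    · rw [codisjoint_iff_le_sup]
      intro x _
      have h1 : π x ∈ U := hπU x
      have h2 : x - π x ∈ LinearMap.ker π := by
        rw [LinearMap.mem_ker, map_sub, hπfix _ (hπU x), sub_self]
      have : x = π x + (x - π x) := by abel
      rw [this]
      exact Submodule.add_mem _ (Submodule.mem_sup_left h1) (Submodule.mem_sup_right h2)

/-- Trace splits over a stable complement pair. -/
theorem trace_eq_add_of_isCompl [FiniteDimensional ℂ W] {U U' : Submodule ℂ W}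
    (hc : IsCompl U U') (f : W →ₗ[ℂ] W)
    (hU : ∀ x ∈ U, f x ∈ U) (hU' : ∀ x ∈ U', f x ∈ U') :
    trace ℂ W f = trace ℂ U (f.restrict hU) + trace ℂ U' (f.restrict hU') := by
  set e := Submodule.prodEquivOfIsCompl U U' hc
  have hf : f = e.conj ((f.restrict hU).prodMap (f.restrict hU')) := by
    apply LinearMap.ext
    intro x
    obtain ⟨y, rfl⟩ := e.surjective x
    rw [LinearEquiv.conj_apply, LinearMap.comp_apply, LinearMap.comp_apply]
    simp only [LinearEquiv.coe_coe, LinearEquiv.symm_apply_apply]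
    rw [show e y = (y.1 : W) + (y.2 : W) from rfl]
    rw [show (e ((f.restrict hU).prodMap (f.restrict hU') y) : W) =
      (((f.restrict hU).prodMap (f.restrict hU') y).1 : W) +
      (((f.restrict hU).prodMap (f.restrict hU') y).2 : W) from rfl]
    simp [LinearMap.restrict_apply, map_add]
  conv_lhs => rw [hf]
  rw [LinearMap.trace_conj', LinearMap.trace_prodMap']


-- PART 2
theorem finrank_invariants_add [FiniteDimensional ℂ W] (ρ : Representation ℂ G W)
    {U U' : Submodule ℂ W} (hc : IsCompl U U') (hU : Stable ρ U) (hU' : Stable ρ U') :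
    finrank ℂ ρ.invariants
      = finrank ℂ (subRep ρ hU).invariants + finrank ℂ (subRep ρ hU').invariants := by
  set A := Submodule.map U.subtype (subRep ρ hU).invariants with hA
  set B := Submodule.map U'.subtype (subRep ρ hU').invariants with hB
  have hAU : A ≤ U := Submodule.map_subtype_le _ _
  have hBU : B ≤ U' := Submodule.map_subtype_le _ _
  have hinf : A ⊓ B = ⊥ := by
    rw [eq_bot_iff]
    intro x hx
    exact (hc.disjoint.le_bot ⟨hAU hx.1, hBU hx.2⟩ : x ∈ ⊥)
  have hsup : A ⊔ B = ρ.invariants := by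
    apply le_antisymm
    · apply sup_le
      · rintro x ⟨y, hy, rfl⟩
        rw [mem_invariants] at *
        intro σ
        have := congrArg (Submodule.subtype U) (hy σ)
        simpa using this
      · rintro x ⟨y, hy, rfl⟩
        rw [mem_invariants] at *
        intro σ
        have := congrArg (Submodule.subtype U') (hy σ)
        simpa using this
    · intro w hw
      rw [mem_invariants] at hw
      obtain ⟨u, u', hu, hu', huu⟩ : ∃ u u', u ∈ U ∧ u' ∈ U' ∧ u + u' = w := by
        have : w ∈ U ⊔ U' := by rw [hc.codisjoint.eq_top]; trivial
        obtain ⟨u, hu, u', hu', h⟩ := Submodule.mem_sup.1 this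
        exact ⟨u, u', hu, hu', h⟩
      have hcomp : ∀ σ : G, ρ σ u = u ∧ ρ σ u' = u' := by
        intro σ
        have hsum : ρ σ u + ρ σ u' = u + u' := by
          rw [← map_add]; rw [huu]; exact hw σ
        have hdiff : ρ σ u - u = u' - ρ σ u' := by
          have h := hsum
          have : (ρ σ u - u) - (u' - ρ σ u') = (ρ σ u + ρ σ u') - (u + u') := by abel
          rw [← sub_eq_zero, this, h, sub_self]
        have hmem : ρ σ u - u ∈ U ⊓ U' := by
          constructor
          · exact Submodule.sub_mem _ (hU σ u hu) hu
          · rw [hdiff]; exact Submodule.sub_mem _ hu' (hU' σ u' hu')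
        have h0 : ρ σ u - u = 0 := hc.disjoint.le_bot hmem
        constructor
        · rwa [sub_eq_zero] at h0
        · have : u' - ρ σ u' = 0 := by rw [← hdiff, h0]
          rw [sub_eq_zero] at this; exact this.symm
      rw [← huu]
      apply Submodule.add_mem
      · apply Submodule.mem_sup_left
        exact ⟨⟨u, hu⟩, fun σ => Subtype.ext (hcomp σ).1, rfl⟩
      · apply Submodule.mem_sup_right
        exact ⟨⟨u', hu'⟩, fun σ => Subtype.ext (hcomp σ).2, rfl⟩
  have h1 := Submodule.finrank_sup_add_finrank_inf_eq A B
  rw [hinf, hsup] at h1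
  rw [finrank_bot, add_zero] at h1
  rw [h1, hA, hB, Submodule.finrank_map_subtype_eq, Submodule.finrank_map_subtype_eq]

theorem trace_eq_of_isConj [FiniteDimensional ℂ W] (ρ : Representation ℂ G W) {σ τ : G}
    (h : IsConj σ τ) : trace ℂ W (ρ σ) = trace ℂ W (ρ τ) := by
  obtain ⟨c, hc⟩ := h
  have h1 : (c : G) * σ = τ * c := hc
  have h2 : τ = (c : G) * σ * (↑c)⁻¹ := by
    rw [eq_mul_inv_iff_mul_eq, h1]
  rw [h2, show ρ ((c : G) * σ * (↑c)⁻¹) = ρ ((c : G) * σ) * ρ ((↑c)⁻¹) from map_mul ρ _ _,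
    trace_mul_comm, ← map_mul ρ]
  congr 1
  group


-- PART 3 : twist by sign, for symmetric groups
variable {m : ℕ}

def sgn (σ : Equiv.Perm (Fin m)) : ℂ := ((Equiv.Perm.sign σ : ℤ) : ℂ)

lemma sgn_mul (σ τ : Equiv.Perm (Fin m)) : sgn (σ * τ) = sgn σ * sgn τ := by
  unfold sgn
  rw [map_mul]
  push_cast
  ring

lemma sgn_one : sgn (1 : Equiv.Perm (Fin m)) = 1 := by unfold sgn; simp

lemma sgn_sq (σ : Equiv.Perm (Fin m)) : sgn σ * sgn σ = 1 := by
  unfold sgn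
  rcases Int.units_eq_one_or (Equiv.Perm.sign σ) with h | h <;> rw [h] <;> norm_num

lemma sgn_ne_zero (σ : Equiv.Perm (Fin m)) : sgn σ ≠ 0 := by
  intro h
  have := sgn_sq σ
  rw [h, mul_zero] at this
  exact zero_ne_one this

def twist (ρ : Representation ℂ (Equiv.Perm (Fin m)) W) :
    Representation ℂ (Equiv.Perm (Fin m)) W where
  toFun σ := sgn σ • ρ σ
  map_one' := by show sgn 1 • ρ 1 = 1; rw [sgn_one, map_one, one_smul]
  map_mul' σ τ := by
    show sgn (σ * τ) • ρ (σ * τ) = (sgn σ • ρ σ) * (sgn τ • ρ τ)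
    rw [sgn_mul, map_mul]
    ext x
    simp only [LinearMap.smul_apply, Module.End.mul_apply]
    rw [map_smul]
    rw [smul_smul]

@[simp] lemma twist_apply (ρ : Representation ℂ (Equiv.Perm (Fin m)) W) (σ : Equiv.Perm (Fin m))
    (x : W) : twist ρ σ x = sgn σ • ρ σ x := rfl

lemma stable_twist {ρ : Representation ℂ (Equiv.Perm (Fin m)) W} {U : Submodule ℂ W}
    (hU : Stable ρ U) : Stable (twist ρ) U := by
  intro σ x hx
  rw [show twist ρ σ x = sgn σ • ρ σ x from rfl]
  exact Submodule.smul_mem _ _ (hU σ x hx)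

lemma stable_of_twist {ρ : Representation ℂ (Equiv.Perm (Fin m)) W} {U : Submodule ℂ W}
    (hU : Stable (twist ρ) U) : Stable ρ U := by
  intro σ x hx
  have := hU σ x hx
  rw [show twist ρ σ x = sgn σ • ρ σ x from rfl] at this
  have h2 := Submodule.smul_mem U (sgn σ)⁻¹ this
  rwa [smul_smul, inv_mul_cancel₀ (sgn_ne_zero σ), one_smul] at h2

lemma twist_twist (ρ : Representation ℂ (Equiv.Perm (Fin m)) W) : twist (twist ρ) = ρ := by
  ext σ x
  show sgn σ • (sgn σ • ρ σ x) = ρ σ x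
  rw [smul_smul, sgn_sq, one_smul]

lemma subRep_twist (ρ : Representation ℂ (Equiv.Perm (Fin m)) W) {U : Submodule ℂ W}
    (hU : Stable ρ U) :
    subRep (twist ρ) (stable_twist hU) = twist (subRep ρ hU) := by
  ext σ x
  rfl

-- trace of ρ g is real for a three-cycle g
theorem trace_threeCycle_real [FiniteDimensional ℂ W]
    (ρ : Representation ℂ (Equiv.Perm (Fin m)) W) {g : Equiv.Perm (Fin m)}
    (hg : g.IsThreeCycle) : (trace ℂ W (ρ g)).im = 0 := by
  set a : W →ₗ[ℂ] W := ρ g with ha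
  have ha3 : a * a * a = 1 := by
    rw [ha, ← map_mul ρ, ← map_mul ρ]
    rw [show g * g * g = 1 by
      have : g ^ 3 = 1 := by rw [← hg.orderOf]; exact pow_orderOf_eq_one g
      rw [pow_succ, pow_two] at this
      exact this]
    exact map_one ρ
  set s : W →ₗ[ℂ] W := 1 + a + a * a with hs
  have has : a * s = s := by
    rw [hs, mul_add, mul_add, mul_one, ← mul_assoc, ha3]
    abel
  have hss : s * s = (3 : ℂ) • s := by
    have h1 : s * s = 1 * s + a * s + (a * a) * s := by
      conv_lhs => rw [show s = 1 + a + a * a from hs]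
      rw [add_mul, add_mul]
    rw [h1, one_mul, has, mul_assoc, has, has]
    rw [show (3 : ℂ) • s = s + s + s by rw [show (3:ℂ) = 1+1+1 by norm_num]; simp [add_smul]]
  set P : W →ₗ[ℂ] W := (3 : ℂ)⁻¹ • s with hP
  have hPP : P * P = P := by
    rw [hP, smul_mul_assoc, mul_smul_comm, hss, smul_smul, smul_smul]
    norm_num
  have hproj : LinearMap.IsProj (LinearMap.range P) P := by
    constructor
    · intro x
      exact LinearMap.mem_range_self P x
    · rintro x ⟨y, rfl⟩
      have := LinearMap.congr_fun hPP y
      simpa using this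
  have htr : trace ℂ W P = (finrank ℂ (LinearMap.range P) : ℂ) := hproj.trace
  have htrs : trace ℂ W s = (3 : ℂ) * (finrank ℂ (LinearMap.range P) : ℂ) := by
    have h2 : trace ℂ W P = (3:ℂ)⁻¹ * trace ℂ W s := by
      rw [hP, map_smul, smul_eq_mul]
    rw [h2] at htr
    field_simp at htr
    rw [htr, mul_comm]
  have hconj : trace ℂ W (ρ (g * g)) = trace ℂ W (ρ g) := by
    refine trace_eq_of_isConj ρ (Equiv.Perm.isConj_of_cycleType_eq ?_)
    rw [hg.isThreeCycle_sq.cycleType, hg.cycleType]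
  have hsum : (finrank ℂ W : ℂ) + 2 * trace ℂ W (ρ g)
      = (3 : ℂ) * (finrank ℂ (LinearMap.range P) : ℂ) := by
    rw [← htrs, hs]
    rw [map_add, map_add, trace_one]
    rw [show a * a = ρ (g * g) by rw [ha, ← map_mul ρ]]
    rw [hconj, ha]
    ring
  have him := congrArg Complex.im hsum
  simp only [Complex.add_im, Complex.mul_im, Complex.natCast_im, Complex.natCast_re,
    Complex.re_ofNat, Complex.im_ofNat] at him
  linarith [him]


-- PART 4 : the permutation module and the standard representation

def permRep (m : ℕ) : Representation ℂ (Equiv.Perm (Fin m)) (Fin m → ℂ) where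
  toFun σ := LinearMap.funLeft ℂ ℂ ⇑σ⁻¹
  map_one' := by ext x i; simp [LinearMap.funLeft]
  map_mul' σ τ := by ext x i; simp [LinearMap.funLeft, Equiv.Perm.mul_apply]

@[simp] lemma permRep_apply {m : ℕ} (σ : Equiv.Perm (Fin m)) (x : Fin m → ℂ) (i : Fin m) :
    permRep m σ x i = x (σ⁻¹ i) := rfl

def sumL (m : ℕ) : (Fin m → ℂ) →ₗ[ℂ] ℂ where
  toFun x := ∑ i, x i
  map_add' x y := by simp [Finset.sum_add_distrib]
  map_smul' c x := by simp [Finset.mul_sum]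

def Dsub (m : ℕ) : Submodule ℂ (Fin m → ℂ) := ℂ ∙ (fun _ => 1 : Fin m → ℂ)

def Zsub (m : ℕ) : Submodule ℂ (Fin m → ℂ) := LinearMap.ker (sumL m)

lemma mem_Zsub {m : ℕ} (x : Fin m → ℂ) : x ∈ Zsub m ↔ ∑ i, x i = 0 := Iff.rfl

lemma stable_D (m : ℕ) : Stable (permRep m) (Dsub m) := by
  intro σ x hx
  obtain ⟨a, rfl⟩ := Submodule.mem_span_singleton.1 hx
  have : permRep m σ (a • (fun _ => 1 : Fin m → ℂ)) = a • (fun _ => 1 : Fin m → ℂ) := by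
    funext i; simp
  rw [this]
  exact Submodule.smul_mem _ _ (Submodule.mem_span_singleton_self _)

lemma stable_Z (m : ℕ) : Stable (permRep m) (Zsub m) := by
  intro σ x hx
  rw [mem_Zsub] at hx ⊢
  rw [show ∑ i, permRep m σ x i = ∑ i, x (σ⁻¹ i) from rfl]
  rw [Equiv.sum_comp σ⁻¹ x]
  exact hx

lemma isCompl_DZ (m : ℕ) (hm : 1 ≤ m) : IsCompl (Dsub m) (Zsub m) := by
  have hmC : (m : ℂ) ≠ 0 := Nat.cast_ne_zero.2 (by omega)
  constructor
  · rw [Submodule.disjoint_def]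
    intro x hxD hxZ
    obtain ⟨a, rfl⟩ := Submodule.mem_span_singleton.1 hxD
    rw [mem_Zsub] at hxZ
    simp only [Pi.smul_apply, smul_eq_mul, mul_one, Finset.sum_const, Finset.card_univ,
      Fintype.card_fin, nsmul_eq_mul] at hxZ
    have : a = 0 := by
      rcases mul_eq_zero.1 hxZ with h | h
      · exact absurd h hmC
      · exact h
    rw [this, zero_smul]
  · rw [codisjoint_iff_le_sup]
    intro x _
    set c : ℂ := (∑ i, x i) / m with hc
    have h1 : c • (fun _ => 1 : Fin m → ℂ) ∈ Dsub m :=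
      Submodule.smul_mem _ _ (Submodule.mem_span_singleton_self _)
    have h2 : x - c • (fun _ => 1 : Fin m → ℂ) ∈ Zsub m := by
      rw [mem_Zsub]
      simp only [Pi.sub_apply, Pi.smul_apply, smul_eq_mul, mul_one, Finset.sum_sub_distrib,
        Finset.sum_const, Finset.card_univ, Fintype.card_fin, nsmul_eq_mul]
      rw [hc]
      field_simp
      ring
    have : x = c • (fun _ => 1 : Fin m → ℂ) + (x - c • (fun _ => 1 : Fin m → ℂ)) := by abel
    rw [this]
    exact Submodule.add_mem _ (Submodule.mem_sup_left h1) (Submodule.mem_sup_right h2)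

lemma trace_permRep {m : ℕ} (σ : Equiv.Perm (Fin m)) :
    trace ℂ (Fin m → ℂ) (permRep m σ) = ((m - σ.support.card : ℕ) : ℂ) := by
  classical
  rw [LinearMap.trace_eq_matrix_trace ℂ (Pi.basisFun ℂ (Fin m))]
  rw [Matrix.trace]
  have hdiag : ∀ i, (LinearMap.toMatrix (Pi.basisFun ℂ (Fin m)) (Pi.basisFun ℂ (Fin m))
      (permRep m σ)).diag i = if σ⁻¹ i = i then 1 else 0 := by
    intro i
    rw [Matrix.diag_apply, LinearMap.toMatrix_apply, Pi.basisFun_repr, Pi.basisFun_apply]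
    simp [Pi.single_apply]
  rw [Finset.sum_congr rfl fun i _ => hdiag i]
  rw [Finset.sum_boole]
  congr 1
  have key : Finset.filter (fun i => σ⁻¹ i = i) Finset.univ
      = Finset.filter (fun i => ¬ σ i ≠ i) Finset.univ := by
    apply Finset.filter_congr
    intro i _
    constructor
    · intro h
      simp only [ne_eq, not_not]
      conv_lhs => rw [← h]
      exact (Equiv.apply_symm_apply σ i)
    · intro h
      simp only [ne_eq, not_not] at h
      conv_lhs => rw [← h]
      exact (Equiv.symm_apply_apply σ i)
  rw [key]
  have hcards := Finset.card_filter_add_card_filter_not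
    (s := (Finset.univ : Finset (Fin m))) (p := fun i => σ i ≠ i)
  rw [Finset.card_univ, Fintype.card_fin] at hcards
  have hsupp : Equiv.Perm.support σ = Finset.filter (fun i => σ i ≠ i) Finset.univ := rfl
  have hnat : (Finset.filter (fun i => ¬ σ i ≠ i) Finset.univ).card = m - σ.support.card := by
    rw [hsupp]; omega
  rw [hnat]

lemma Z_irred {m : ℕ} {U : Submodule ℂ (Fin m → ℂ)} (hU : Stable (permRep m) U)
    (hUZ : U ≤ Zsub m) (hne : U ≠ ⊥) : U = Zsub m := by
  classical
  obtain ⟨u, huU, hu0⟩ := Submodule.exists_mem_ne_zero_of_ne_bot hne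
  obtain ⟨i, hi⟩ : ∃ i, u i ≠ 0 := by
    by_contra h
    push_neg at h
    exact hu0 (funext h)
  obtain ⟨j, hj⟩ : ∃ j, u j ≠ u i := by
    by_contra h
    push_neg at h
    have hsum : ∑ k, u k = 0 := (mem_Zsub u).1 (hUZ huU)
    rw [Finset.sum_congr rfl fun k _ => h k] at hsum
    rw [Finset.sum_const, Finset.card_univ, Fintype.card_fin, nsmul_eq_mul] at hsum
    rcases mul_eq_zero.1 hsum with h' | h'
    · exact absurd h' (Nat.cast_ne_zero.2 (by have := i.pos; omega))
    · exact hi h'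
  have hij : i ≠ j := fun h => hj (h ▸ rfl)
  set δ : ℂ := u i - u j with hδ
  have hδ0 : δ ≠ 0 := sub_ne_zero.2 fun h => hj h.symm
  have hdiff : u - permRep m (swap i j) u = δ • (Pi.single i 1 - Pi.single j 1) := by
    funext k
    simp only [Pi.sub_apply, permRep_apply, Pi.smul_apply, smul_eq_mul]
    rw [show (swap i j)⁻¹ = swap i j from Equiv.swap_inv i j]
    rw [Pi.single_apply, Pi.single_apply]
    rcases eq_or_ne k i with rfl | hki
    · rw [if_pos rfl, if_neg hij, Equiv.swap_apply_left, hδ]; ring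
    · rcases eq_or_ne k j with rfl | hkj
      · rw [if_neg (Ne.symm hij), if_pos rfl, Equiv.swap_apply_right, hδ]; ring
      · rw [if_neg hki, if_neg hkj, Equiv.swap_apply_of_ne_of_ne hki hkj]; ring
  have hbase : (Pi.single i 1 - Pi.single j 1 : Fin m → ℂ) ∈ U := by
    have h1 : u - permRep m (swap i j) u ∈ U :=
      Submodule.sub_mem _ huU (hU _ _ huU)
    rw [hdiff] at h1
    have h2 := Submodule.smul_mem U δ⁻¹ h1
    rwa [smul_smul, inv_mul_cancel₀ hδ0, one_smul] at h2
  have hsingle : ∀ σ : Equiv.Perm (Fin m),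
      permRep m σ (Pi.single i 1 - Pi.single j 1 : Fin m → ℂ)
        = Pi.single (σ i) 1 - Pi.single (σ j) 1 := by
    intro σ
    funext k
    simp only [permRep_apply, Pi.sub_apply, Pi.single_apply, Equiv.Perm.inv_eq_iff_eq]
  have hpair : ∀ k l : Fin m, k ≠ l → (Pi.single k 1 - Pi.single l 1 : Fin m → ℂ) ∈ U := by
    intro k l hkl
    set j' : Fin m := swap i k j with hj'
    have hj'k : j' ≠ k := by
      intro h
      apply hij
      have := congrArg (swap i k) h
      rw [hj'] at this
      rw [Equiv.swap_apply_self, Equiv.swap_apply_right] at this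
      exact this.symm ▸ rfl
    set σ : Equiv.Perm (Fin m) := swap j' l * swap i k with hσ
    have hσi : σ i = k := by
      rw [hσ, Equiv.Perm.mul_apply, Equiv.swap_apply_left,
        Equiv.swap_apply_of_ne_of_ne (Ne.symm hj'k) hkl]
    have hσj : σ j = l := by
      rw [hσ, Equiv.Perm.mul_apply, ← hj', Equiv.swap_apply_left]
    have := hU σ _ hbase
    rwa [hsingle σ, hσi, hσj] at this
  apply le_antisymm hUZ
  intro z hz
  rw [mem_Zsub] at hz
  have hrepr : z = ∑ k, z k • (Pi.single k 1 - Pi.single i 1 : Fin m → ℂ) := by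
    rw [show ∑ k, z k • (Pi.single k 1 - Pi.single i 1 : Fin m → ℂ)
        = (∑ k, z k • (Pi.single k 1 : Fin m → ℂ))
          - (∑ k, z k) • (Pi.single i 1 : Fin m → ℂ) by
      rw [Finset.sum_smul]
      rw [← Finset.sum_sub_distrib]
      congr 1
      funext k
      rw [smul_sub]]
    rw [hz, zero_smul, sub_zero]
    funext k
    rw [Finset.sum_apply]
    rw [Finset.sum_eq_single k]
    · simp
    · intro b _ hbk
      simp [Pi.single_eq_of_ne (Ne.symm hbk)]
    · intro h
      exact absurd (Finset.mem_univ k) h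
  rw [hrepr]
  apply Submodule.sum_mem
  intro k _
  rcases eq_or_ne k i with rfl | hki
  · rw [sub_self, smul_zero]
    exact Submodule.zero_mem _
  · exact Submodule.smul_mem _ _ (hpair k i hki)

-- PART 5: identification with the standard representation

lemma perm_fix_const {m : ℕ} (σ : Equiv.Perm (Fin m)) :
    ∀ x ∈ Dsub m, permRep m σ x = x := by
  intro x hx
  obtain ⟨a, rfl⟩ := Submodule.mem_span_singleton.1 hx
  funext i
  simp

theorem std_trace {m : ℕ} {W : Type*} [AddCommGroup W] [Module ℂ W] [FiniteDimensional ℂ W]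
    (ρ : Representation ℂ (Equiv.Perm (Fin m)) W)
    (hirr : ∀ U : Submodule ℂ W, Stable ρ U → U = ⊥ ∨ U = ⊤)
    (hT : ρ.invariants = ⊥) (p : Fin m) {w : W} (hw0 : w ≠ 0)
    (hw : ∀ τ : Equiv.Perm (Fin m), τ p = p → ρ τ w = w) (σ : Equiv.Perm (Fin m)) :
    trace ℂ W (ρ σ) = ((m - σ.support.card : ℕ) : ℂ) - 1 := by
  classical
  have hm1 : 1 ≤ m := p.pos
  have key : ∀ (σ : Equiv.Perm (Fin m)) (j : Fin m),
      ρ σ (ρ (swap p j) w) = ρ (swap p (σ j)) w := by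
    intro σ j
    have hfix : ((swap p (σ j)) * (σ * swap p j)) p = p := by
      simp only [Equiv.Perm.mul_apply]
      rw [Equiv.swap_apply_left, Equiv.swap_apply_right]
    have h := hw _ hfix
    calc ρ σ (ρ (swap p j) w) = ρ (σ * swap p j) w := by rw [map_mul ρ]; rfl
      _ = ρ (swap p (σ j) * (swap p (σ j) * (σ * swap p j))) w := by
          congr 1
          rw [← mul_assoc, Equiv.swap_mul_self, one_mul]
      _ = ρ (swap p (σ j)) (ρ (swap p (σ j) * (σ * swap p j)) w) := by rw [map_mul ρ]; rfl
      _ = ρ (swap p (σ j)) w := by rw [h]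
  set φ : (Fin m → ℂ) →ₗ[ℂ] W :=
    ∑ i, (LinearMap.proj i : (Fin m → ℂ) →ₗ[ℂ] ℂ).smulRight (ρ (swap p i) w) with hφ
  have φapp : ∀ x : Fin m → ℂ, φ x = ∑ i, x i • ρ (swap p i) w := by
    intro x
    rw [hφ, LinearMap.sum_apply]
    exact Finset.sum_congr rfl fun i _ => rfl
  have hequi : ∀ (σ : Equiv.Perm (Fin m)) (x : Fin m → ℂ),
      φ (permRep m σ x) = ρ σ (φ x) := by
    intro σ x
    rw [φapp, φapp, map_sum]
    have h1 : ∀ j, ρ σ (x j • ρ (swap p j) w) = x j • ρ (swap p (σ j)) w := by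
      intro j; rw [map_smul, key]
    rw [Finset.sum_congr rfl fun j _ => h1 j]
    refine (Fintype.sum_equiv σ _ _ fun j => ?_).symm
    rw [permRep_apply, ← Equiv.Perm.mul_apply, inv_mul_cancel, Equiv.Perm.one_apply]
  have hφw : φ (Pi.single p 1) = w := by
    rw [φapp, Finset.sum_eq_single p]
    · rw [Pi.single_eq_same, one_smul, Equiv.swap_self]
      rw [show (Equiv.refl (Fin m) : Equiv.Perm (Fin m)) = 1 from rfl, map_one ρ]
      rfl
    · intro b _ hbp
      rw [Pi.single_eq_of_ne hbp, zero_smul]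
    · intro h; exact absurd (Finset.mem_univ p) h
  have hrange : LinearMap.range φ = ⊤ := by
    have hstab : Stable ρ (LinearMap.range φ) := by
      rintro σ x ⟨y, rfl⟩
      exact ⟨permRep m σ y, hequi σ y⟩
    rcases hirr _ hstab with h | h
    · exfalso
      have : w ∈ LinearMap.range φ := ⟨Pi.single p 1, hφw⟩
      rw [h, Submodule.mem_bot] at this
      exact hw0 this
    · exact h
  have hconst : φ (fun _ => 1) = 0 := by
    have hinv : φ (fun _ => 1) ∈ ρ.invariants := by
      rw [mem_invariants]
      intro σ
      rw [← hequi]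
      congr 1
    rw [hT, Submodule.mem_bot] at hinv
    exact hinv
  have hkerD : Dsub m ≤ LinearMap.ker φ := by
    intro x hx
    obtain ⟨a, rfl⟩ := Submodule.mem_span_singleton.1 hx
    rw [LinearMap.mem_ker, map_smul, hconst, smul_zero]
  have hkerZbot : LinearMap.ker φ ⊓ Zsub m = ⊥ := by
    by_contra hne
    have hst : Stable (permRep m) (LinearMap.ker φ ⊓ Zsub m) := by
      intro σ' x hx
      refine ⟨LinearMap.mem_ker.2 ?_, stable_Z m σ' x hx.2⟩
      rw [hequi, show φ x = 0 from hx.1, map_zero]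
    have heq := Z_irred hst inf_le_right hne
    have hZker : Zsub m ≤ LinearMap.ker φ := by
      rw [← heq]; exact inf_le_left
    have hker_top : LinearMap.ker φ = ⊤ := by
      rw [eq_top_iff, ← (isCompl_DZ m hm1).codisjoint.eq_top]
      exact sup_le hkerD hZker
    have : φ (Pi.single p 1) = 0 := by
      have : Pi.single p 1 ∈ LinearMap.ker φ := hker_top ▸ Submodule.mem_top
      exact LinearMap.mem_ker.1 this
    rw [hφw] at this
    exact hw0 this
  set φZ : Zsub m →ₗ[ℂ] W := φ ∘ₗ (Zsub m).subtype with hφZ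
  have hinj : Function.Injective φZ := by
    rw [← LinearMap.ker_eq_bot]
    rw [eq_bot_iff]
    rintro ⟨z, hz⟩ hker
    rw [LinearMap.mem_ker, hφZ, LinearMap.comp_apply] at hker
    have : z ∈ LinearMap.ker φ ⊓ Zsub m := ⟨hker, hz⟩
    rw [hkerZbot, Submodule.mem_bot] at this
    exact Subtype.ext this
  have hsurj : Function.Surjective φZ := by
    intro y
    obtain ⟨x, hx⟩ : ∃ x, φ x = y := by
      have : y ∈ LinearMap.range φ := hrange ▸ Submodule.mem_top
      exact this
    have hx_sup : x ∈ Dsub m ⊔ Zsub m := by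
      rw [(isCompl_DZ m hm1).codisjoint.eq_top]; trivial
    obtain ⟨xd, hxd, xz, hxz, rfl⟩ := Submodule.mem_sup.1 hx_sup
    refine ⟨⟨xz, hxz⟩, ?_⟩
    rw [hφZ, LinearMap.comp_apply]
    rw [map_add] at hx
    rw [show φ xd = 0 from LinearMap.mem_ker.1 (hkerD hxd), zero_add] at hx
    exact hx
  set e : Zsub m ≃ₗ[ℂ] W := LinearEquiv.ofBijective φZ ⟨hinj, hsurj⟩ with he
  have hconj : ρ σ = e.conj (subRep (permRep m) (stable_Z m) σ) := by
    apply LinearMap.ext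
    intro y
    obtain ⟨z, rfl⟩ := e.surjective y
    rw [LinearEquiv.conj_apply, LinearMap.comp_apply]
    simp only [LinearEquiv.coe_coe, LinearMap.comp_apply, LinearEquiv.symm_apply_apply]
    have h1 : (e z : W) = φ (z : Fin m → ℂ) := rfl
    have h2 : (e (subRep (permRep m) (stable_Z m) σ z) : W) = φ (permRep m σ (z : Fin m → ℂ)) := rfl
    rw [h1, h2, hequi]
  have htrZ : trace ℂ W (ρ σ) = trace ℂ (Zsub m) (subRep (permRep m) (stable_Z m) σ) := by
    rw [hconj, LinearMap.trace_conj']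
  have htr_split := trace_eq_add_of_isCompl (isCompl_DZ m hm1) (permRep m σ)
    (stable_D m σ) (stable_Z m σ)
  have htrD : trace ℂ (Dsub m) ((permRep m σ).restrict (stable_D m σ)) = 1 := by
    have hid : (permRep m σ).restrict (stable_D m σ) = LinearMap.id := by
      apply LinearMap.ext
      intro x
      apply Subtype.ext
      rw [LinearMap.restrict_apply]
      exact perm_fix_const σ (x : Fin m → ℂ) x.2
    rw [hid]
    rw [show (LinearMap.id : Dsub m →ₗ[ℂ] Dsub m) = 1 from rfl, trace_one]
    have hone : (fun _ => 1 : Fin m → ℂ) ≠ 0 := by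
      intro h
      have := congrFun h p
      simp at this
    rw [show Dsub m = ℂ ∙ (fun _ => 1 : Fin m → ℂ) from rfl, finrank_span_singleton hone]
    norm_num
  have : trace ℂ (Zsub m) ((permRep m σ).restrict (stable_Z m σ))
      = ((m - σ.support.card : ℕ) : ℂ) - 1 := by
    rw [trace_permRep σ] at htr_split
    rw [htrD] at htr_split
    linear_combination -htr_split
  rw [htrZ]
  exact this

-- PART 6a : S_3 facts and embedding utilities

lemma dec1 : ∀ g σ : Equiv.Perm (Fin 3), g ^ 3 = 1 → g ≠ 1 → σ ^ 3 = 1 → σ ≠ 1 →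
    σ = g ∨ σ = g⁻¹ := by decide

lemma dec2 : ∀ g σ : Equiv.Perm (Fin 3), g ^ 3 = 1 → g ≠ 1 →
    σ = 1 ∨ σ = g ∨ σ = g⁻¹ ∨ σ = swap 0 1 ∨ σ = swap 0 1 * g ∨ σ = swap 0 1 * g⁻¹ := by decide

lemma sgn_threeCycle_aux {m : ℕ} {g : Equiv.Perm (Fin m)} (hg3 : g ^ 3 = 1) : sgn g = 1 := by
  have h1 : (Equiv.Perm.sign g) ^ 3 = 1 := by
    rw [← map_pow, hg3, map_one]
  rcases Int.units_eq_one_or (Equiv.Perm.sign g) with h | h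
  · rw [sgn, h]; norm_num
  · exfalso
    rw [h] at h1
    exact absurd h1 (by decide)

lemma sgn_inv {m : ℕ} (g : Equiv.Perm (Fin m)) : sgn g⁻¹ = sgn g := by
  unfold sgn
  rw [map_inv]
  rcases Int.units_eq_one_or (Equiv.Perm.sign g) with h | h <;> rw [h] <;> norm_num

-- embedding Fin n into Fin (n+1)
def embE (n : ℕ) : Fin n ≃ {x : Fin (n + 1) // x ≠ Fin.last n} where
  toFun i := ⟨i.castSucc, (Fin.castSucc_lt_last i).ne⟩
  invFun x := x.1.castPred x.2
  left_inv i := by simp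
  right_inv x := by apply Subtype.ext; simp

def Hhom (n : ℕ) : Equiv.Perm (Fin n) →* Equiv.Perm (Fin (n + 1)) :=
  Equiv.Perm.extendDomainHom (embE n)

lemma Hhom_apply_castSucc {n : ℕ} (σ : Equiv.Perm (Fin n)) (i : Fin n) :
    Hhom n σ (Fin.castSucc i) = Fin.castSucc (σ i) := by
  have := Equiv.Perm.extendDomain_apply_image σ (embE n) i
  exact this

lemma Hhom_apply_last {n : ℕ} (σ : Equiv.Perm (Fin n)) :
    Hhom n σ (Fin.last n) = Fin.last n := by
  apply Equiv.Perm.extendDomain_apply_not_subtype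
  simp

lemma Hhom_cycleType {n : ℕ} (σ : Equiv.Perm (Fin n)) :
    (Hhom n σ).cycleType = σ.cycleType :=
  Equiv.Perm.cycleType_extendDomain (embE n)

lemma Hhom_threeCycle {n : ℕ} {σ : Equiv.Perm (Fin n)} (h : σ.IsThreeCycle) :
    (Hhom n σ).IsThreeCycle := by
  have : (Hhom n σ).cycleType = {3} := by rw [Hhom_cycleType]; exact h
  exact this

lemma Hhom_sign {n : ℕ} (σ : Equiv.Perm (Fin n)) :
    Equiv.Perm.sign (Hhom n σ) = Equiv.Perm.sign σ :=
  Equiv.Perm.sign_extendDomain σ (embE n)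

lemma Hhom_sgn {n : ℕ} (σ : Equiv.Perm (Fin n)) : sgn (Hhom n σ) = sgn σ := by
  unfold sgn
  rw [Hhom_sign]

lemma stab_lift {n : ℕ} (τ : Equiv.Perm (Fin (n + 1))) (hτ : τ (Fin.last n) = Fin.last n) :
    ∃ τ' : Equiv.Perm (Fin n), Hhom n τ' = τ := by
  have hτinv : τ⁻¹ (Fin.last n) = Fin.last n := by
    conv_lhs => rw [← hτ]
    exact Equiv.symm_apply_apply τ _
  have hne : ∀ i : Fin n, τ (Fin.castSucc i) ≠ Fin.last n := by
    intro i h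
    have := τ.injective (h.trans hτ.symm)
    exact absurd this (Fin.castSucc_lt_last i).ne
  have hne' : ∀ i : Fin n, τ⁻¹ (Fin.castSucc i) ≠ Fin.last n := by
    intro i h
    have := τ⁻¹.injective (h.trans hτinv.symm)
    exact absurd this (Fin.castSucc_lt_last i).ne
  refine ⟨⟨fun i => (τ (Fin.castSucc i)).castPred (hne i),
          fun i => (τ⁻¹ (Fin.castSucc i)).castPred (hne' i), ?_, ?_⟩, ?_⟩
  · intro i
    apply Fin.castSucc_injective n
    rw [Fin.castSucc_castPred, Fin.castSucc_castPred]
    exact Equiv.symm_apply_apply τ _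
  · intro i
    apply Fin.castSucc_injective n
    rw [Fin.castSucc_castPred, Fin.castSucc_castPred]
    exact Equiv.apply_symm_apply τ _
  · apply Equiv.ext
    intro x
    induction x using Fin.lastCases with
    | last => rw [Hhom_apply_last, hτ]
    | cast i =>
        rw [Hhom_apply_castSucc]
        show Fin.castSucc ((τ (Fin.castSucc i)).castPred (hne i)) = τ (Fin.castSucc i)
        rw [Fin.castSucc_castPred]

lemma twist_comp {n : ℕ} {W : Type*} [AddCommGroup W] [Module ℂ W]
    (ρ : Representation ℂ (Equiv.Perm (Fin (n + 1))) W) :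
    twist (ρ.comp (Hhom n)) = (twist ρ).comp (Hhom n) := by
  apply MonoidHom.ext
  intro σ
  show sgn σ • ρ (Hhom n σ) = sgn (Hhom n σ) • ρ (Hhom n σ)
  rw [Hhom_sgn]

-- PART 6b : base case m = 3

universe u

theorem handler3 {W : Type u} [AddCommGroup W] [Module ℂ W] [FiniteDimensional ℂ W]
    [Nontrivial W] (ρ : Representation ℂ (Equiv.Perm (Fin 3)) W)
    (hirr : ∀ U : Submodule ℂ W, Stable ρ U → U = ⊥ ∨ U = ⊤)
    (hT : ρ.invariants = ⊥) (hS : (twist ρ).invariants = ⊥)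
    (g : Equiv.Perm (Fin 3)) (hg : g.IsThreeCycle) :
    (trace ℂ W (ρ 1)).re - (trace ℂ W (ρ g)).re ≥
      (trace ℂ W (ρ 1)).re / (((3 : ℕ) : ℝ) - 1) := by
  have hg3 : g ^ 3 = 1 := by
    have h := pow_orderOf_eq_one g
    rwa [hg.orderOf] at h
  have hg1 : g ≠ 1 := by
    intro h
    have := hg.orderOf
    rw [h, orderOf_one] at this
    omega
  have htr1 : trace ℂ W (ρ 1) = (finrank ℂ W : ℂ) := by rw [map_one, trace_one]
  set V₀ : Submodule ℂ W := LinearMap.ker (ρ g - LinearMap.id) with hV₀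
  have hmemV₀ : ∀ x : W, x ∈ V₀ ↔ ρ g x = x := by
    intro x
    rw [hV₀, LinearMap.mem_ker, LinearMap.sub_apply, LinearMap.id_apply, sub_eq_zero]
  have hrhoinv : ∀ x : W, ρ g x = x → ρ g⁻¹ x = x := by
    intro x hx
    have h := rho_inv_apply ρ g⁻¹ x
    rw [inv_inv, hx] at h
    exact h
  have hstabV₀ : Stable ρ V₀ := by
    intro τ x hx
    rw [hmemV₀] at hx ⊢
    have hcube : (τ⁻¹ * g * τ) ^ 3 = 1 := by
      have hexp : ∀ y : Equiv.Perm (Fin 3), y ^ 3 = y * y * y := fun y => by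
        rw [pow_succ, pow_two]
      have h1 : (τ⁻¹ * g * τ) ^ 3 = τ⁻¹ * g ^ 3 * τ := by
        rw [hexp, hexp]
        group
      rw [h1, hg3]
      group
    have hne1 : τ⁻¹ * g * τ ≠ 1 := by
      intro h
      apply hg1
      have h2 : g = τ * (τ⁻¹ * g * τ) * τ⁻¹ := by group
      rw [h, mul_one] at h2
      rw [h2, mul_inv_cancel]
    have hgτ : ρ g (ρ τ x) = ρ τ (ρ (τ⁻¹ * g * τ) x) := by
      have e1 : g * τ = τ * (τ⁻¹ * g * τ) := by group
      calc ρ g (ρ τ x) = ρ (g * τ) x := by rw [map_mul ρ]; rfl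
        _ = ρ (τ * (τ⁻¹ * g * τ)) x := by rw [e1]
        _ = ρ τ (ρ (τ⁻¹ * g * τ) x) := by rw [map_mul ρ]; rfl
    rcases dec1 g (τ⁻¹ * g * τ) hg3 hg1 hcube hne1 with h | h
    · rw [hgτ, h, hx]
    · rw [hgτ, h, hrhoinv x hx]
  rcases hirr V₀ hstabV₀ with hV | hV
  · -- V₀ = ⊥ : compute the trace
    set a : W →ₗ[ℂ] W := ρ g with ha
    have ha3 : a * a * a = 1 := by
      rw [ha, ← map_mul ρ, ← map_mul ρ]
      rw [show g * g * g = 1 by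
        have := hg3
        rw [pow_succ, pow_two] at this
        exact this]
      exact map_one ρ
    have hmul : a * ((3:ℂ)⁻¹ • (1 + a + a * a)) = (3:ℂ)⁻¹ • (1 + a + a * a) := by
      rw [mul_smul_comm]
      congr 1
      rw [mul_add, mul_add, mul_one, ← mul_assoc, ha3]
      abel
    have hP0 : ((3:ℂ)⁻¹ • (1 + a + a * a) : W →ₗ[ℂ] W) = 0 := by
      apply LinearMap.ext
      intro x
      have hmem : ((3:ℂ)⁻¹ • (1 + a + a * a)) x ∈ V₀ := by
        rw [hmemV₀]
        exact LinearMap.congr_fun hmul x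
      rw [hV, Submodule.mem_bot] at hmem
      rw [hmem]
      rfl
    have htr0 := congrArg (trace ℂ W) hP0
    rw [map_smul, map_zero] at htr0
    have hsum0 : trace ℂ W (1 + a + a * a) = 0 := by
      have h3 : (3:ℂ)⁻¹ ≠ 0 := by norm_num
      rcases smul_eq_zero.1 htr0 with h | h
      · exact absurd h h3
      · exact h
    have hconjtr : trace ℂ W (a * a) = trace ℂ W a := by
      rw [ha, ← map_mul ρ]
      refine trace_eq_of_isConj ρ (Equiv.Perm.isConj_of_cycleType_eq ?_)
      rw [hg.isThreeCycle_sq.cycleType, hg.cycleType]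
    rw [map_add, map_add, trace_one, hconjtr] at hsum0
    have hre := congrArg Complex.re hsum0
    simp only [Complex.add_re, Complex.natCast_re, Complex.zero_re] at hre
    rw [htr1, Complex.natCast_re]
    have hd0 : (0:ℝ) ≤ (finrank ℂ W : ℝ) := Nat.cast_nonneg _
    have hag : trace ℂ W a = trace ℂ W (ρ g) := rfl
    rw [hag] at hre
    norm_num
    linarith
  · -- V₀ = ⊤ : derive a contradiction
    exfalso
    have hρg : ∀ x : W, ρ g x = x := by
      intro x
      exact (hmemV₀ x).1 (hV ▸ Submodule.mem_top)
    have hρginv : ∀ x : W, ρ g⁻¹ x = x := fun x => hrhoinv x (hρg x)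
    set τ0 : Equiv.Perm (Fin 3) := swap 0 1 with hτ0
    obtain ⟨c, hc⟩ := Module.End.exists_eigenvalue (ρ τ0 : Module.End ℂ W)
    obtain ⟨v, hv⟩ := hc.exists_hasEigenvector
    have hv0 : v ≠ 0 := hv.right
    have hτv : ρ τ0 v = c • v := hv.apply_eq_smul
    have hτgv : ρ (τ0 * g) v = c • v := by
      calc ρ (τ0 * g) v = ρ τ0 (ρ g v) := by rw [map_mul ρ]; rfl
        _ = c • v := by rw [hρg]; exact hτv
    have hτginv : ρ (τ0 * g⁻¹) v = c • v := by
      calc ρ (τ0 * g⁻¹) v = ρ τ0 (ρ g⁻¹ v) := by rw [map_mul ρ]; rfl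
        _ = c • v := by rw [hρginv]; exact hτv
    have hcc : c * c = 1 := by
      have h1 : ρ (τ0 * τ0) v = v := by
        rw [show τ0 * τ0 = 1 from Equiv.swap_mul_self 0 1, map_one]
        rfl
      have h2 : ρ (τ0 * τ0) v = (c * c) • v := by
        calc ρ (τ0 * τ0) v = ρ τ0 (ρ τ0 v) := by rw [map_mul ρ]; rfl
          _ = (c * c) • v := by rw [hτv, map_smul, hτv, smul_smul]
      have h3 : (c * c - 1) • v = 0 := by
        rw [sub_smul, one_smul, ← h2, h1, sub_self]
      rcases smul_eq_zero.1 h3 with h | h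
      · linear_combination h
      · exact absurd h hv0
    rcases mul_self_eq_one_iff.1 hcc with hc1 | hc1
    · have hmem : v ∈ ρ.invariants := by
        rw [mem_invariants]
        intro σ
        rcases dec2 g σ hg3 hg1 with h|h|h|h|h|h <;> rw [h]
        · rw [map_one]; rfl
        · exact hρg v
        · exact hρginv v
        · rw [hτv, hc1, one_smul]
        · rw [hτgv, hc1, one_smul]
        · rw [hτginv, hc1, one_smul]
      rw [hT, Submodule.mem_bot] at hmem
      exact hv0 hmem
    · have hsg : sgn g = 1 := sgn_threeCycle_aux hg3
      have hsginv : sgn g⁻¹ = 1 := by rw [sgn_inv, hsg]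
      have hsτ : sgn τ0 = -1 := by
        rw [hτ0]
        unfold sgn
        rw [Equiv.Perm.sign_swap (by decide)]
        norm_num
      have hmem : v ∈ (twist ρ).invariants := by
        rw [mem_invariants]
        intro σ
        show sgn σ • ρ σ v = v
        rcases dec2 g σ hg3 hg1 with h|h|h|h|h|h <;> rw [h]
        · rw [sgn_one, map_one, one_smul]; rfl
        · rw [hsg, hρg, one_smul]
        · rw [hsginv, hρginv, one_smul]
        · rw [hsτ, hτv, hc1, smul_smul]; norm_num
        · rw [sgn_mul, hsg, hsτ, hτgv, hc1, smul_smul]; norm_num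
        · rw [sgn_mul, hsginv, hsτ, hτginv, hc1, smul_smul]; norm_num
      rw [hS, Submodule.mem_bot] at hmem
      exact hv0 hmem

-- PART 6c : the general claim by induction on the dimension

/-- The main inductive claim for `S_n`. -/
def ClaimN (n : ℕ) : Prop :=
  ∀ (W : Type u) [AddCommGroup W] [Module ℂ W] [FiniteDimensional ℂ W],
  ∀ (ρ : Representation ℂ (Equiv.Perm (Fin n)) W) (g : Equiv.Perm (Fin n)), g.IsThreeCycle →
    (trace ℂ W (ρ 1)).re - (trace ℂ W (ρ g)).re ≥
      (trace ℂ W (ρ 1)).re / ((n : ℝ) - 1)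
        - ((finrank ℂ ρ.invariants : ℝ) + (finrank ℂ (twist ρ).invariants : ℝ))

theorem claimN_of_handler (n : ℕ) (hn : 3 ≤ n)
    (handler : ∀ (W : Type u) [AddCommGroup W] [Module ℂ W] [FiniteDimensional ℂ W]
      [Nontrivial W] (ρ : Representation ℂ (Equiv.Perm (Fin n)) W),
      (∀ U : Submodule ℂ W, Stable ρ U → U = ⊥ ∨ U = ⊤) →
      ρ.invariants = ⊥ → (twist ρ).invariants = ⊥ →
      ∀ g : Equiv.Perm (Fin n), g.IsThreeCycle →
      (trace ℂ W (ρ 1)).re - (trace ℂ W (ρ g)).re ≥ (trace ℂ W (ρ 1)).re / ((n : ℝ) - 1)) :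
    ClaimN.{u} n := by
  have hn1 : (1:ℝ) ≤ (n : ℝ) - 1 := by
    have : (3:ℝ) ≤ (n : ℝ) := by exact_mod_cast hn
    linarith
  have hn0 : (0:ℝ) < (n : ℝ) - 1 := by linarith
  suffices h : ∀ (d : ℕ) (W : Type u) (_ : AddCommGroup W) (_ : Module ℂ W)
      (_ : FiniteDimensional ℂ W) (ρ : Representation ℂ (Equiv.Perm (Fin n)) W),
      finrank ℂ W = d → ∀ g : Equiv.Perm (Fin n), g.IsThreeCycle →
      (trace ℂ W (ρ 1)).re - (trace ℂ W (ρ g)).re ≥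
        (trace ℂ W (ρ 1)).re / ((n : ℝ) - 1)
          - ((finrank ℂ ρ.invariants : ℝ) + (finrank ℂ (twist ρ).invariants : ℝ)) by
    intro W _ _ _ ρ g hg
    exact h (finrank ℂ W) W ‹_› ‹_› ‹_› ρ rfl g hg
  intro d
  induction d using Nat.strong_induction_on with
  | _ d IH =>
  intro W _ _ _ ρ hd g hg
  have hTnn : (0:ℝ) ≤ (finrank ℂ ρ.invariants : ℝ) := Nat.cast_nonneg _
  have hSnn : (0:ℝ) ≤ (finrank ℂ (twist ρ).invariants : ℝ) := Nat.cast_nonneg _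
  rcases Nat.eq_zero_or_pos d with hd0 | hdpos
  · -- zero-dimensional space
    subst hd0
    haveI hsub : Subsingleton W := Module.finrank_zero_iff.1 hd
    have hzero : ∀ σ : Equiv.Perm (Fin n), trace ℂ W (ρ σ) = 0 := by
      intro σ
      rw [Subsingleton.elim (ρ σ) 0, map_zero]
    rw [hzero, hzero, Complex.zero_re, zero_div, sub_self]
    linarith
  · by_cases hsplit : ∃ U : Submodule ℂ W, Stable ρ U ∧ U ≠ ⊥ ∧ U ≠ ⊤
    · obtain ⟨U, hU, hUbot, hUtop⟩ := hsplit
      obtain ⟨U', hU', hc⟩ := exists_stable_compl ρ hU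
      have hrank := Submodule.finrank_add_eq_of_isCompl hc
      have hUpos : 0 < finrank ℂ U := by
        rcases Nat.eq_zero_or_pos (finrank ℂ U) with h | h
        · exact absurd (Submodule.finrank_eq_zero.1 h) hUbot
        · exact h
      have hU'pos : 0 < finrank ℂ U' := by
        rcases Nat.eq_zero_or_pos (finrank ℂ U') with h | h
        · exfalso
          apply hUtop
          have hbot : U' = ⊥ := Submodule.finrank_eq_zero.1 h
          have h2 := hc.codisjoint.eq_top
          rwa [hbot, sup_bot_eq] at h2
        · exact h
      rw [hd] at hrank
      have ih1 := IH (finrank ℂ U) (by omega) U inferInstance inferInstance inferInstance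
        (subRep ρ hU) rfl g hg
      have ih2 := IH (finrank ℂ U') (by omega) U' inferInstance inferInstance inferInstance
        (subRep ρ hU') rfl g hg
      have htr : ∀ σ : Equiv.Perm (Fin n), trace ℂ W (ρ σ)
          = trace ℂ U (subRep ρ hU σ) + trace ℂ U' (subRep ρ hU' σ) := by
        intro σ
        exact trace_eq_add_of_isCompl hc (ρ σ) (hU σ) (hU' σ)
      have hinvT := finrank_invariants_add ρ hc hU hU'
      have hinvS := finrank_invariants_add (twist ρ) hc (stable_twist hU) (stable_twist hU')
      rw [subRep_twist ρ hU, subRep_twist ρ hU'] at hinvS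
      rw [htr 1, htr g]
      rw [hinvT, hinvS]
      push_cast
      rw [Complex.add_re, Complex.add_re, add_div]
      linarith [ih1, ih2]
    · push_neg at hsplit
      have hirr : ∀ U : Submodule ℂ W, Stable ρ U → U = ⊥ ∨ U = ⊤ := by
        intro U hU
        by_contra hcon
        push_neg at hcon
        exact hcon.2 (hsplit U hU hcon.1)
      haveI : Nontrivial W := Module.nontrivial_of_finrank_pos (by omega : 0 < finrank ℂ W)
      have htr1 : trace ℂ W (ρ 1) = (finrank ℂ W : ℂ) := by rw [map_one, trace_one]
      by_cases hT : ρ.invariants = ⊥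
      · by_cases hS : (twist ρ).invariants = ⊥
        · have := handler W ρ hirr hT hS g hg
          rw [hT, hS, finrank_bot]
          rw [htr1, Complex.natCast_re] at this ⊢
          push_cast
          linarith [this]
        · -- sign case : trace ρ g = trace ρ 1
          obtain ⟨w, hwmem, hw0⟩ := Submodule.exists_mem_ne_zero_of_ne_bot hS
          rw [mem_invariants] at hwmem
          have hρw : ∀ σ : Equiv.Perm (Fin n), ρ σ w = sgn σ • w := by
            intro σ
            have h := hwmem σ
            rw [show twist ρ σ w = sgn σ • ρ σ w from rfl] at h
            have := congrArg (fun z => sgn σ • z) h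
            simp only [smul_smul, sgn_sq, one_smul] at this
            exact this
          have hstab : Stable ρ (ℂ ∙ w) := by
            intro σ x hx
            obtain ⟨a, rfl⟩ := Submodule.mem_span_singleton.1 hx
            rw [map_smul, hρw, smul_smul]
            exact Submodule.smul_mem _ _ (Submodule.mem_span_singleton_self w)
          have hspan : (ℂ ∙ w) = ⊤ := by
            rcases hirr (ℂ ∙ w) hstab with h | h
            · exfalso
              exact hw0 (by
                have : w ∈ (⊥ : Submodule ℂ W) := h ▸ Submodule.mem_span_singleton_self w
                simpa using this)
            · exact h
          have hall : ∀ (σ : Equiv.Perm (Fin n)) (x : W), ρ σ x = sgn σ • x := by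
            intro σ x
            have hx : x ∈ (ℂ ∙ w) := hspan ▸ Submodule.mem_top
            obtain ⟨a, rfl⟩ := Submodule.mem_span_singleton.1 hx
            rw [map_smul, hρw, smul_smul, smul_smul, mul_comm]
          have hSfull : (twist ρ).invariants = ⊤ := by
            rw [eq_top_iff]
            intro x _
            rw [mem_invariants]
            intro σ
            show sgn σ • ρ σ x = x
            rw [hall, smul_smul, sgn_sq, one_smul]
          have hgtr : trace ℂ W (ρ g) = trace ℂ W (ρ 1) := by
            have h1 : ρ g = ρ 1 := by
              apply LinearMap.ext
              intro x
              rw [hall, hall]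
              rw [sgn_one, sgn_threeCycle_aux (by
                have h := pow_orderOf_eq_one g
                rwa [hg.orderOf] at h)]
            rw [h1]
          rw [hgtr, sub_self]
          rw [hSfull, finrank_top, htr1, Complex.natCast_re, hd]
          have : (d:ℝ) / ((n:ℝ) - 1) ≤ (d:ℝ) := by
            apply div_le_self (Nat.cast_nonneg d) hn1
          linarith [hTnn]
      · -- trivial case : trace ρ g = trace ρ 1
        obtain ⟨w, hwmem, hw0⟩ := Submodule.exists_mem_ne_zero_of_ne_bot hT
        rw [mem_invariants] at hwmem
        have hstab : Stable ρ (ℂ ∙ w) := by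
          intro σ x hx
          obtain ⟨a, rfl⟩ := Submodule.mem_span_singleton.1 hx
          rw [map_smul, hwmem σ]
          exact Submodule.smul_mem _ _ (Submodule.mem_span_singleton_self w)
        have hspan : (ℂ ∙ w) = ⊤ := by
          rcases hirr (ℂ ∙ w) hstab with h | h
          · exfalso
            exact hw0 (by
              have : w ∈ (⊥ : Submodule ℂ W) := h ▸ Submodule.mem_span_singleton_self w
              simpa using this)
          · exact h
        have hall : ∀ (σ : Equiv.Perm (Fin n)) (x : W), ρ σ x = x := by
          intro σ x
          have hx : x ∈ (ℂ ∙ w) := hspan ▸ Submodule.mem_top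
          obtain ⟨a, rfl⟩ := Submodule.mem_span_singleton.1 hx
          rw [map_smul, hwmem σ]
        have hTfull : ρ.invariants = ⊤ := by
          rw [eq_top_iff]
          intro x _
          rw [mem_invariants]
          intro σ
          exact hall σ x
        have hgtr : trace ℂ W (ρ g) = trace ℂ W (ρ 1) := by
          have h1 : ρ g = ρ 1 := by
            apply LinearMap.ext
            intro x
            rw [hall, hall]
          rw [h1]
        rw [hgtr, sub_self]
        rw [hTfull, finrank_top, htr1, Complex.natCast_re, hd]
        have : (d:ℝ) / ((n:ℝ) - 1) ≤ (d:ℝ) := by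
          apply div_le_self (Nat.cast_nonneg d) hn1
        linarith [hSnn]

-- PART 6d : the induction step via restriction and the assembled claim

theorem handler_step (n : ℕ) (hn : 3 ≤ n) (IH : ClaimN.{u} n)
    {W : Type u} [AddCommGroup W] [Module ℂ W] [FiniteDimensional ℂ W] [Nontrivial W]
    (ρ : Representation ℂ (Equiv.Perm (Fin (n + 1))) W)
    (hirr : ∀ U : Submodule ℂ W, Stable ρ U → U = ⊥ ∨ U = ⊤)
    (hT : ρ.invariants = ⊥) (hS : (twist ρ).invariants = ⊥)
    (g : Equiv.Perm (Fin (n + 1))) (hg : g.IsThreeCycle) :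
    (trace ℂ W (ρ 1)).re - (trace ℂ W (ρ g)).re ≥
      (trace ℂ W (ρ 1)).re / (((n + 1 : ℕ) : ℝ) - 1) := by
  have hnR : (3:ℝ) ≤ (n : ℝ) := by exact_mod_cast hn
  set ρ' : Representation ℂ (Equiv.Perm (Fin n)) W := ρ.comp (Hhom n) with hρ'
  -- a three-cycle downstairs
  have h0 : (0:ℕ) < n := by omega
  have h1 : (1:ℕ) < n := by omega
  have h2 : (2:ℕ) < n := by omega
  set a : Fin n := ⟨0, h0⟩
  set b : Fin n := ⟨1, h1⟩
  set c : Fin n := ⟨2, h2⟩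
  have hab : a ≠ b := by simp [a, b, Fin.ext_iff]
  have hac : a ≠ c := by simp [a, c, Fin.ext_iff]
  have hbc : b ≠ c := by simp [b, c, Fin.ext_iff]
  set g' : Equiv.Perm (Fin n) := swap a b * swap a c with hg'def
  have hg' : g'.IsThreeCycle := Equiv.Perm.isThreeCycle_swap_mul_swap_same hab hac hbc
  have hHg' : (Hhom n g').IsThreeCycle := Hhom_threeCycle hg'
  have htrg : trace ℂ W (ρ (Hhom n g')) = trace ℂ W (ρ g) := by
    refine trace_eq_of_isConj ρ (Equiv.Perm.isConj_of_cycleType_eq ?_)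
    rw [hHg'.cycleType, hg.cycleType]
  have hρ'1 : trace ℂ W (ρ' 1) = trace ℂ W (ρ 1) := by
    rw [hρ']
    rw [show (ρ.comp (Hhom n)) 1 = ρ 1 by rw [MonoidHom.comp_apply, map_one]]
  have hρ'g' : trace ℂ W (ρ' g') = trace ℂ W (ρ g) := by
    rw [hρ']
    rw [show (ρ.comp (Hhom n)) g' = ρ (Hhom n g') from rfl]
    exact htrg
  have htr1 : trace ℂ W (ρ 1) = (finrank ℂ W : ℂ) := by rw [map_one, trace_one]
  have htr1re : (trace ℂ W (ρ 1)).re = (finrank ℂ W : ℝ) := by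
    rw [htr1, Complex.natCast_re]
  -- numeric computation common to the two "standard representation" cases
  have hstdcase : trace ℂ W (ρ 1) = ((n + 1 - 0 : ℕ) : ℂ) - 1 →
      trace ℂ W (ρ g) = ((n + 1 - 3 : ℕ) : ℂ) - 1 →
      (trace ℂ W (ρ 1)).re - (trace ℂ W (ρ g)).re ≥
        (trace ℂ W (ρ 1)).re / (((n + 1 : ℕ) : ℝ) - 1) := by
    intro hv1 hvg
    have hre1 : (trace ℂ W (ρ 1)).re = (n : ℝ) := by
      rw [hv1, Complex.sub_re, Complex.natCast_re, Complex.one_re]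
      push_cast
      ring
    have hreg : (trace ℂ W (ρ g)).re = (n : ℝ) - 3 := by
      rw [hvg, Complex.sub_re, Complex.natCast_re, Complex.one_re]
      rw [Nat.cast_sub (by omega)]
      push_cast
      ring
    rw [hre1, hreg]
    have hcast : ((n + 1 : ℕ) : ℝ) - 1 = (n : ℝ) := by push_cast; ring
    rw [hcast]
    have : (n:ℝ) / n = 1 := div_self (by linarith)
    rw [this]
    linarith
  by_cases hT' : ρ'.invariants = ⊥
  · by_cases hS' : (twist ρ').invariants = ⊥
    · have hclaim := IH W ρ' g' hg'
      rw [hT', hS', finrank_bot] at hclaim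
      rw [hρ'1, hρ'g'] at hclaim
      have hd0 : (0:ℝ) ≤ (trace ℂ W (ρ 1)).re := by
        rw [htr1re]; exact Nat.cast_nonneg _
      have hdiv : (trace ℂ W (ρ 1)).re / (((n + 1 : ℕ) : ℝ) - 1)
          ≤ (trace ℂ W (ρ 1)).re / ((n : ℝ) - 1) := by
        apply div_le_div_of_nonneg_left hd0 (by linarith)
        push_cast
        linarith
      push_cast at hclaim
      linarith
    · -- sign-twisted standard case
      obtain ⟨w, hwmem, hw0⟩ := Submodule.exists_mem_ne_zero_of_ne_bot hS'
      rw [mem_invariants] at hwmem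
      have hwmem' : ∀ σ' : Equiv.Perm (Fin n), (twist ρ) (Hhom n σ') w = w := by
        intro σ'
        have h := hwmem σ'
        rw [show twist ρ' σ' = ((twist ρ).comp (Hhom n)) σ' by rw [← twist_comp ρ]] at h
        exact h
      have hfix : ∀ τ : Equiv.Perm (Fin (n + 1)), τ (Fin.last n) = Fin.last n →
          (twist ρ) τ w = w := by
        intro τ hτ
        obtain ⟨τ', rfl⟩ := stab_lift τ hτ
        exact hwmem' τ'
      have hirr_t : ∀ U : Submodule ℂ W, Stable (twist ρ) U → U = ⊥ ∨ U = ⊤ := fun U hU =>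
        hirr U (stable_of_twist hU)
      have hstd := std_trace (twist ρ) hirr_t hS (Fin.last n) hw0 hfix
      have htw1 : (twist ρ) 1 = ρ 1 := by rw [map_one, map_one]
      have htwg : (twist ρ) g = ρ g := by
        show sgn g • ρ g = ρ g
        rw [show sgn g = 1 by unfold sgn; rw [hg.sign]; norm_num, one_smul]
      apply hstdcase
      · have hv1 := hstd 1
        rw [htw1, Equiv.Perm.support_one, Finset.card_empty] at hv1
        exact hv1
      · have hvg := hstd g
        rw [htwg, hg.card_support] at hvg
        exact hvg
  · -- standard case
    obtain ⟨w, hwmem, hw0⟩ := Submodule.exists_mem_ne_zero_of_ne_bot hT'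
    rw [mem_invariants] at hwmem
    have hfix : ∀ τ : Equiv.Perm (Fin (n + 1)), τ (Fin.last n) = Fin.last n → ρ τ w = w := by
      intro τ hτ
      obtain ⟨τ', rfl⟩ := stab_lift τ hτ
      exact hwmem τ'
    have hstd := std_trace ρ hirr hT (Fin.last n) hw0 hfix
    apply hstdcase
    · have hv1 := hstd 1
      rw [Equiv.Perm.support_one, Finset.card_empty] at hv1
      exact hv1
    · have hvg := hstd g
      rw [hg.card_support] at hvg
      exact hvg

-- PART 7 : assembling everything

theorem claim_all (n : ℕ) (hn : 3 ≤ n) : ClaimN.{u} n := by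
  induction n, hn using Nat.le_induction with
  | base =>
      exact claimN_of_handler 3 le_rfl
        (fun W _ _ _ _ ρ hirr hT hS g hg => handler3 ρ hirr hT hS g hg)
  | succ n hn IH =>
      exact claimN_of_handler (n + 1) (by omega)
        (fun W _ _ _ _ ρ hirr hT hS g hg => handler_step n hn IH ρ hirr hT hS g hg)

end S8

/- STATEMENT 8: For any irreducible character χ of S_m other than the trivial and the sign
character (equivalently, χ = χ^λ with λ ∉ {(m), (1,…,1)}, since irreducible characters of S_m
are indexed by partitions and these two partitions index exactly the trivial and sign
characters), one has χ(1) - χ((123)) ≥ χ(1)/(m-1) for a 3-cycle (123).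
χ is realized as the character of an irreducible complex representation ρ. -/
theorem char_one_sub_char_threeCycle_ge (m : ℕ) {W : Type*} [AddCommGroup W] [Module ℂ W]
    [FiniteDimensional ℂ W] (ρ : Representation ℂ (Equiv.Perm (Fin m)) W)
    (hnz : (⊥ : Submodule ℂ W) ≠ ⊤)
    (hirr : ∀ U : Submodule ℂ W, (∀ σ, U.map (ρ σ) ≤ U) → U = ⊥ ∨ U = ⊤)
    (hnottriv : ¬ ∀ σ, LinearMap.trace ℂ W (ρ σ) = 1)
    (hnotsign : ¬ ∀ σ, LinearMap.trace ℂ W (ρ σ) = ((Equiv.Perm.sign σ : ℤ) : ℂ))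
    (g : Equiv.Perm (Fin m)) (hg : g.IsThreeCycle) :
    (LinearMap.trace ℂ W (ρ g)).im = 0 ∧
    (LinearMap.trace ℂ W (ρ 1)).re - (LinearMap.trace ℂ W (ρ g)).re ≥
      (LinearMap.trace ℂ W (ρ 1)).re / ((m : ℝ) - 1) := by
  constructor
  · exact S8.trace_threeCycle_real ρ hg
  · have hm : 3 ≤ m := by
      have h1 := hg.card_support
      have h2 : g.support.card ≤ Fintype.card (Fin m) := Finset.card_le_univ _
      rw [h1, Fintype.card_fin] at h2
      exact h2
    have hirr' : ∀ U : Submodule ℂ W, S8.Stable ρ U → U = ⊥ ∨ U = ⊤ := by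
      intro U hU
      apply hirr U
      intro σ
      rw [Submodule.map_le_iff_le_comap]
      intro x hx
      exact hU σ x hx
    have hT : ρ.invariants = ⊥ := by
      by_contra hT
      obtain ⟨w, hwmem, hw0⟩ := Submodule.exists_mem_ne_zero_of_ne_bot hT
      rw [Representation.mem_invariants] at hwmem
      have hstab : S8.Stable ρ (ℂ ∙ w) := by
        intro σ x hx
        obtain ⟨a, rfl⟩ := Submodule.mem_span_singleton.1 hx
        rw [map_smul, hwmem σ]
        exact Submodule.smul_mem _ _ (Submodule.mem_span_singleton_self w)
      have hspan : (ℂ ∙ w) = ⊤ := by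
        rcases hirr' (ℂ ∙ w) hstab with h | h
        · exfalso
          exact hw0 (by
            have : w ∈ (⊥ : Submodule ℂ W) := h ▸ Submodule.mem_span_singleton_self w
            simpa using this)
        · exact h
      have hfr : Module.finrank ℂ W = 1 := by
        rw [← finrank_top ℂ W, ← hspan, finrank_span_singleton hw0]
      apply hnottriv
      intro σ
      have hid : ρ σ = 1 := by
        apply LinearMap.ext
        intro x
        have hx : x ∈ (ℂ ∙ w) := hspan ▸ Submodule.mem_top
        obtain ⟨a, rfl⟩ := Submodule.mem_span_singleton.1 hx
        rw [map_smul, hwmem σ]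
        rfl
      rw [hid, LinearMap.trace_one, hfr, Nat.cast_one]
    have hS : (S8.twist ρ).invariants = ⊥ := by
      by_contra hS
      obtain ⟨w, hwmem, hw0⟩ := Submodule.exists_mem_ne_zero_of_ne_bot hS
      rw [Representation.mem_invariants] at hwmem
      have hρw : ∀ σ : Equiv.Perm (Fin m), ρ σ w = S8.sgn σ • w := by
        intro σ
        have h := hwmem σ
        rw [show S8.twist ρ σ w = S8.sgn σ • ρ σ w from rfl] at h
        have := congrArg (fun z => S8.sgn σ • z) h
        simp only [smul_smul, S8.sgn_sq, one_smul] at this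
        exact this
      have hstab : S8.Stable ρ (ℂ ∙ w) := by
        intro σ x hx
        obtain ⟨a, rfl⟩ := Submodule.mem_span_singleton.1 hx
        rw [map_smul, hρw, smul_smul]
        exact Submodule.smul_mem _ _ (Submodule.mem_span_singleton_self w)
      have hspan : (ℂ ∙ w) = ⊤ := by
        rcases hirr' (ℂ ∙ w) hstab with h | h
        · exfalso
          exact hw0 (by
            have : w ∈ (⊥ : Submodule ℂ W) := h ▸ Submodule.mem_span_singleton_self w
            simpa using this)
        · exact h
      have hfr : Module.finrank ℂ W = 1 := by
        rw [← finrank_top ℂ W, ← hspan, finrank_span_singleton hw0]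
      apply hnotsign
      intro σ
      have hid : ρ σ = S8.sgn σ • (1 : W →ₗ[ℂ] W) := by
        apply LinearMap.ext
        intro x
        have hx : x ∈ (ℂ ∙ w) := hspan ▸ Submodule.mem_top
        obtain ⟨a, rfl⟩ := Submodule.mem_span_singleton.1 hx
        rw [map_smul, hρw]
        show a • S8.sgn σ • w = S8.sgn σ • (a • w)
        rw [smul_comm]
      rw [hid, map_smul, LinearMap.trace_one, hfr, Nat.cast_one, smul_eq_mul, mul_one]
      rfl
    have hclaim := S8.claim_all m hm W ρ g hg
    rw [hT, hS, finrank_bot] at hclaim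
    push_cast at hclaim
    linarith
end
end

section
/- Let G ≤ GL(V) be a maximal coprime linear group on a finite vector space V over F_q (i.e., (|G|,|V|)=1 and no coprime subgroup of GL(V) strictly contains G), acting irreducibly. If A ≤ GL(V) is any Abelian subgroup normalised by G, then |A| is coprime to |V| and A ≤ G. -/
/- STATEMENT 13: Let G ≤ GL(V) be a maximal coprime linear group on a finite vector space V
(no coprime subgroup of GL(V) strictly contains G) acting irreducibly.  Then any Abelian
subgroup A ≤ GL(V) normalised by G has order coprime to |V| and satisfies A ≤ G. -/
theorem abelian_normalised_le_maximal_coprime {K : Type*} [Field K] [Fintype K] {V : Type*}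
    [AddCommGroup V] [Module K V] [Fintype V]
    (G : Subgroup (LinearMap.GeneralLinearGroup K V))
    (hcop : Nat.Coprime (Nat.card G) (Fintype.card V))
    (hmax : ∀ L : Subgroup (LinearMap.GeneralLinearGroup K V),
      Nat.Coprime (Nat.card L) (Fintype.card V) → G ≤ L → L = G)
    (hirr : ∀ W : Submodule K V,
      (∀ u ∈ G, W.map ((u : LinearMap.GeneralLinearGroup K V) : V →ₗ[K] V) ≤ W) →
        W = ⊥ ∨ W = ⊤)
    (A : Subgroup (LinearMap.GeneralLinearGroup K V))
    (hab : ∀ a ∈ A, ∀ b ∈ A, a * b = b * a)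
    (hnorm : ∀ g ∈ G, ∀ a ∈ A, g * a * g⁻¹ ∈ A) :
    Nat.Coprime (Nat.card A) (Fintype.card V) ∧ A ≤ G := by
  classical
  -- Trivial case: `V` has one element.
  by_cases hV : Fintype.card V = 1
  · haveI : Subsingleton V := Fintype.card_le_one_iff_subsingleton.mp hV.le
    refine ⟨by rw [hV]; exact Nat.coprime_one_right _, ?_⟩
    intro a _
    have ha : a = 1 := Units.ext (LinearMap.ext fun v => Subsingleton.elim _ _)
    rw [ha]; exact G.one_mem
  -- Nontrivial case.
  haveI : Finite (V →ₗ[K] V) := Finite.of_injective _ DFunLike.coe_injective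
  haveI : Nontrivial V :=
    Fintype.one_lt_card_iff_nontrivial.mp (lt_of_le_of_ne Fintype.card_pos fun h => hV h.symm)
  obtain ⟨p, -, m, hp, hK⟩ := FiniteField.card' K
  haveI := Fact.mk hp
  have hVcard : Fintype.card V = p ^ (↑m * Module.finrank K V) := by
    rw [Module.card_eq_pow_finrank (K := K) (V := V), hK, ← pow_mul]
  have ht : (↑m * Module.finrank K V) ≠ 0 :=
    Nat.mul_ne_zero m.pos.ne' Module.finrank_pos.ne'
  -- The p-primary part of A.
  let P : Subgroup (LinearMap.GeneralLinearGroup K V) :=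
  { carrier := {x | x ∈ A ∧ ∃ k : ℕ, x ^ p ^ k = 1}
    one_mem' := ⟨A.one_mem, 0, one_pow _⟩
    mul_mem' := by
      rintro a b ⟨haA, k, hk⟩ ⟨hbA, l, hl⟩
      refine ⟨A.mul_mem haA hbA, k + l, ?_⟩
      have hc : Commute a b := hab a haA b hbA
      have ha1 : a ^ p ^ (k + l) = 1 := by rw [pow_add, pow_mul, hk, one_pow]
      have hb1 : b ^ p ^ (k + l) = 1 := by
        rw [pow_add, mul_comm (p ^ k), pow_mul, hl, one_pow]
      rw [hc.mul_pow, ha1, hb1, one_mul]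
    inv_mem' := by
      rintro a ⟨haA, k, hk⟩
      exact ⟨A.inv_mem haA, k, by rw [inv_pow, hk, inv_one]⟩ }
  have hPnorm : ∀ g ∈ G, ∀ x ∈ P, g * x * g⁻¹ ∈ P := by
    rintro g hg x ⟨hxA, k, hk⟩
    exact ⟨hnorm g hg x hxA, k, by rw [conj_pow, hk, mul_one, mul_inv_cancel]⟩
  have hP : IsPGroup p ↥P := by
    intro g
    obtain ⟨-, k, hk⟩ := g.2
    exact ⟨k, Subtype.ext (by rw [SubgroupClass.coe_pow, hk, OneMemClass.coe_one])⟩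
  letI : MulAction ↥P V :=
  { smul := fun a v => ((a : LinearMap.GeneralLinearGroup K V) : V →ₗ[K] V) v
    one_smul := fun _ => rfl
    mul_smul := fun _ _ _ => rfl }
  -- The fixed-point submodule of P.
  let W : Submodule K V :=
  { carrier := {v | ∀ a : ↥P, ((a : LinearMap.GeneralLinearGroup K V) : V →ₗ[K] V) v = v}
    zero_mem' := fun a => map_zero _
    add_mem' := fun {v w} hv hw a => by rw [map_add, hv a, hw a]
    smul_mem' := fun c v hv a => by rw [map_smul, hv a] }
  have hWinv : ∀ u ∈ G, W.map ((u : LinearMap.GeneralLinearGroup K V) : V →ₗ[K] V) ≤ W := by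
    rintro u hu x ⟨v, hv, rfl⟩ a
    have hx : u⁻¹ * ↑a * u⁻¹⁻¹ ∈ P := hPnorm u⁻¹ (G.inv_mem hu) _ a.2
    rw [inv_inv] at hx
    have hfix : ((⟨_, hx⟩ : ↥P) : LinearMap.GeneralLinearGroup K V) = u⁻¹ * ↑a * u := rfl
    have e1 : (a : LinearMap.GeneralLinearGroup K V) * u = u * (u⁻¹ * ↑a * u) := by group
    have := hv (⟨_, hx⟩ : ↥P)
    rw [hfix] at this
    show ((a : LinearMap.GeneralLinearGroup K V) : V →ₗ[K] V)
        (((u : LinearMap.GeneralLinearGroup K V) : V →ₗ[K] V) v) = _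
    rw [← Module.End.mul_apply, ← Units.val_mul, e1, Units.val_mul, Module.End.mul_apply, this]
  have hWtop : W = ⊤ := by
    rcases hirr W hWinv with hbot | htop
    · exfalso
      have h0 : (0 : V) ∈ MulAction.fixedPoints ↥P V := fun a => map_zero _
      obtain ⟨b, hb, hb0⟩ := hP.exists_fixed_point_of_prime_dvd_card_of_fixed_point (α := V)
        (by rw [Nat.card_eq_fintype_card, hVcard]; exact dvd_pow_self p ht) h0
      have hbW : b ∈ W := fun a => hb a
      rw [hbot] at hbW
      exact hb0 ((Submodule.mem_bot K).mp hbW).symm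
    · exact htop
  have hP1 : ∀ x ∈ P, x = (1 : LinearMap.GeneralLinearGroup K V) := by
    intro x hx
    refine Units.ext (LinearMap.ext fun v => ?_)
    have hv : v ∈ W := by rw [hWtop]; trivial
    simpa using hv ⟨x, hx⟩
  have hpA : ¬ p ∣ Nat.card ↥A := by
    intro hdvd
    obtain ⟨a, ha⟩ := exists_prime_orderOf_dvd_card' (G := ↥A) p hdvd
    have hap : a ^ p = 1 := by rw [← ha]; exact pow_orderOf_eq_one a
    have haP : (a : LinearMap.GeneralLinearGroup K V) ∈ P :=
      ⟨a.2, 1, by rw [pow_one, ← SubgroupClass.coe_pow, hap, OneMemClass.coe_one]⟩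
    have ha1 : a = 1 := Subtype.ext (by rw [hP1 _ haP, OneMemClass.coe_one])
    rw [ha1, orderOf_one] at ha
    exact hp.ne_one ha.symm
  have hAcop : Nat.Coprime (Nat.card ↥A) (Fintype.card V) := by
    rw [hVcard]
    exact (((Nat.Prime.coprime_iff_not_dvd hp).mpr hpA).symm).pow_right _
  refine ⟨hAcop, ?_⟩
  -- The subgroup generated by A and G.
  have hNnorm : (A ⊔ G : Subgroup (LinearMap.GeneralLinearGroup K V)) ≤ Subgroup.normalizer (A : Set (LinearMap.GeneralLinearGroup K V)) := by
    refine sup_le Subgroup.le_normalizer ?_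
    intro g hg
    rw [Subgroup.mem_normalizer_iff]
    intro x
    constructor
    · exact fun hx => hnorm g hg x hx
    · intro hx
      have h2 := hnorm g⁻¹ (G.inv_mem hg) _ hx
      have e : g⁻¹ * (g * x * g⁻¹) * g⁻¹⁻¹ = x := by group
      rwa [e] at h2
  have hdecomp : ∀ x ∈ A ⊔ G, ∃ a ∈ A, ∃ g ∈ G, a * g = x := by
    intro x hx
    rw [Subgroup.sup_eq_closure] at hx
    refine Subgroup.closure_induction ?_ ?_ ?_ ?_ hx
    · rintro y (hy | hy)
      · exact ⟨y, hy, 1, G.one_mem, mul_one y⟩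
      · exact ⟨1, A.one_mem, y, hy, one_mul y⟩
    · exact ⟨1, A.one_mem, 1, G.one_mem, mul_one 1⟩
    · rintro x y hx' hy' ⟨a₁, ha₁, g₁, hg₁, rfl⟩ ⟨a₂, ha₂, g₂, hg₂, rfl⟩
      exact ⟨a₁ * (g₁ * a₂ * g₁⁻¹), A.mul_mem ha₁ (hnorm g₁ hg₁ a₂ ha₂),
        g₁ * g₂, G.mul_mem hg₁ hg₂, by group⟩
    · rintro x hx' ⟨a, ha, g, hg, rfl⟩
      exact ⟨g⁻¹ * a⁻¹ * g⁻¹⁻¹, hnorm g⁻¹ (G.inv_mem hg) a⁻¹ (A.inv_mem ha),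
        g⁻¹, G.inv_mem hg, by group⟩
  haveI hnormal : (A.subgroupOf (A ⊔ G)).Normal := by
    constructor
    intro a ha n
    rw [Subgroup.mem_subgroupOf] at ha ⊢
    have hn : (↑n : LinearMap.GeneralLinearGroup K V) ∈ Subgroup.normalizer (A : Set (LinearMap.GeneralLinearGroup K V)) := hNnorm n.2
    rw [Subgroup.mem_normalizer_iff] at hn
    simpa using (hn ↑a).mp ha
  have hcardN : Nat.card ↥(A ⊔ G) ∣ Nat.card ↥A * Nat.card ↥G := by
    rw [Subgroup.card_eq_card_quotient_mul_card_subgroup (A.subgroupOf (A ⊔ G))]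
    have h2 : Nat.card (A.subgroupOf (A ⊔ G)) = Nat.card ↥A :=
      Nat.card_congr (Subgroup.subgroupOfEquivOfLe le_sup_left).toEquiv
    have h1 : Nat.card (↥(A ⊔ G) ⧸ A.subgroupOf (A ⊔ G)) ∣ Nat.card ↥G := by
      have hsurj : Function.Surjective ((QuotientGroup.mk' (A.subgroupOf (A ⊔ G))).comp
          (Subgroup.inclusion (le_sup_right : G ≤ A ⊔ G))) := by
        intro q
        obtain ⟨n, rfl⟩ := QuotientGroup.mk'_surjective _ q
        obtain ⟨a, ha, g, hg, hag⟩ := hdecomp ↑n n.2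
        refine ⟨⟨g, hg⟩, ?_⟩
        rw [MonoidHom.comp_apply, QuotientGroup.mk'_apply, QuotientGroup.mk'_apply,
          QuotientGroup.eq]
        rw [Subgroup.mem_subgroupOf]
        have hcoe : ((((Subgroup.inclusion (le_sup_right : G ≤ A ⊔ G)) ⟨g, hg⟩)⁻¹ * n : ↥(A ⊔ G)) :
            LinearMap.GeneralLinearGroup K V) = g⁻¹ * ↑n := rfl
        rw [hcoe, ← hag]
        have e : g⁻¹ * (a * g) = g⁻¹ * a * g⁻¹⁻¹ := by group
        rw [e]
        exact hnorm g⁻¹ (G.inv_mem hg) a ha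
      exact Subgroup.card_dvd_of_surjective _ hsurj
    rw [h2, mul_comm (Nat.card ↥A) (Nat.card ↥G)]
    exact mul_dvd_mul h1 dvd_rfl
  have hNcop : Nat.Coprime (Nat.card ↥(A ⊔ G)) (Fintype.card V) :=
    Nat.Coprime.coprime_dvd_left hcardN (Nat.Coprime.mul hAcop hcop)
  have hNG : A ⊔ G = G := hmax (A ⊔ G) hNcop le_sup_right
  exact hNG ▸ le_sup_left
end
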